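/- Let ζ(θ) = diag(cos²θ, ½sin²θ, ½sin²θ), a classically mixed differentiable state family on ℂ³, and let M₁ = diag(1, ½, 0), M₂ = diag(0, ½, 1), a commuting-operator measurement on ℂ³ with two outcomes. Then at θ₀ = π/4: F^P(ζ₀, ζ₀', {M₁, M₂}) = 4 and F^U(ζ₀, ζ₀', {M₁, M₂}) < 4. Hence there exist a classically mixed state family and a commuting-operator measurement for which the unitary-preprocessing-optimized Fisher information is strictly smaller than the preprocessing-optimized Fisher information. -/
import Mathlib


open scoped Matrix Kronecker ComplexOrder
open Classical

noncomputable section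

/-- A density matrix: positive semidefinite with unit trace. -/
def IsDensityMatrix {n : Type*} [Fintype n] (ρ : Matrix n n ℂ) : Prop :=
  ρ.PosSemidef ∧ ρ.trace = 1

/-- A POVM with `r` outcomes. -/
def IsPOVM {n : Type*} [Fintype n] [DecidableEq n] {r : ℕ}
    (M : Fin r → Matrix n n ℂ) : Prop :=
  (∀ i, (M i).PosSemidef) ∧ ∑ i, M i = 1

/-- The Fisher information of the measurement-outcome distribution. -/
def FisherInfo {n : Type*} [Fintype n] {r : ℕ}
    (ρ ρ' : Matrix n n ℂ) (M : Fin r → Matrix n n ℂ) : ℝ :=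
  ∑ i, if (ρ * M i).trace = 0 then 0
    else ((ρ' * M i).trace.re) ^ 2 / ((ρ * M i).trace.re)

/-- A quantum channel (CPTP map) given by finitely many Kraus operators. -/
def IsQuantumChannel {m n : Type*} [Fintype m] [Fintype n] [DecidableEq m]
    (E : Matrix m m ℂ → Matrix n n ℂ) : Prop :=
  ∃ (κ : ℕ) (K : Fin κ → Matrix n m ℂ),
    (∑ j, (K j)ᴴ * K j = 1) ∧ ∀ σ, E σ = ∑ j, K j * σ * (K j)ᴴ

/-- Quantum preprocessing-optimized Fisher information. -/
def QPFI {m n : Type*} [Fintype m] [Fintype n] [DecidableEq m] {r : ℕ}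
    (ρ ρ' : Matrix m m ℂ) (M : Fin r → Matrix n n ℂ) : ℝ :=
  sSup {x : ℝ | ∃ E : Matrix m m ℂ → Matrix n n ℂ,
    IsQuantumChannel E ∧ x = FisherInfo (E ρ) (E ρ') M}

/-- Quantum unitary-preprocessing-optimized Fisher information. -/
def QUPFI {n : Type*} [Fintype n] [DecidableEq n] {r : ℕ}
    (ρ ρ' : Matrix n n ℂ) (M : Fin r → Matrix n n ℂ) : ℝ :=
  sSup {x : ℝ | ∃ U : Matrix n n ℂ, U ∈ Matrix.unitaryGroup n ℂ ∧
    x = FisherInfo (U * ρ * Uᴴ) (U * ρ' * Uᴴ) M}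

/-- Complex inner product, conjugate-linear in the first argument. -/
def cInner {n : Type*} [Fintype n] (φ ψ : n → ℂ) : ℂ := ∑ k, star (φ k) * ψ k

/-- The functional whose supremum over orthonormal pairs is the normalized QPFI. -/
def gammaSummand {n : Type*} [Fintype n] {r : ℕ}
    (M : Fin r → Matrix n n ℂ) (φ φp : n → ℂ) : ℝ :=
  ∑ i, if cInner φ (M i *ᵥ φ) = 0 then 0
    else ((cInner φ (M i *ᵥ φp)).re) ^ 2 / ((cInner φ (M i *ᵥ φ)).re)

/-- The normalized QPFI of a POVM. -/
def gammaPOVM {n : Type*} [Fintype n] {r : ℕ} (M : Fin r → Matrix n n ℂ) : ℝ :=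
  sSup {x : ℝ | ∃ φ φp : n → ℂ,
    cInner φ φ = 1 ∧ cInner φp φp = 1 ∧ cInner φ φp = 0 ∧ x = gammaSummand M φ φp}

/-- Quantum Fisher information: the Fisher information optimized over all POVMs. -/
def QFI {m : Type*} [Fintype m] [DecidableEq m] (ρ ρ' : Matrix m m ℂ) : ℝ :=
  sSup {x : ℝ | ∃ (κ : ℕ) (T : Fin κ → Matrix m m ℂ), IsPOVM T ∧ x = FisherInfo ρ ρ' T}

/-- Classical Fisher information of a finite probability distribution. -/
def classFisher {r : ℕ} (p p' : Fin r → ℝ) : ℝ :=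
  ∑ i, if p i = 0 then 0 else (p' i) ^ 2 / p i


namespace Stmt16Aux

lemma trace_formula {n : Type*} [Fintype n] [DecidableEq n] (K : Matrix n n ℂ) (δ m : n → ℝ) :
    ((K * Matrix.diagonal (fun k => (δ k : ℂ)) * Kᴴ) * Matrix.diagonal (fun a => (m a : ℂ))).trace
    = ↑(∑ a, ∑ k, m a * δ k * Complex.normSq (K a k)) := by
  simp only [Matrix.trace, Matrix.diag, Matrix.mul_apply, Matrix.diagonal_apply,
    Matrix.conjTranspose_apply, ite_mul, mul_ite, mul_zero, zero_mul,
    Finset.sum_ite_eq, Finset.sum_ite_eq', Finset.mem_univ, if_true]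
  push_cast
  refine Finset.sum_congr rfl fun a _ => ?_
  rw [Finset.sum_mul]
  refine Finset.sum_congr rfl fun k _ => ?_
  have h := Complex.mul_conj (K a k)
  calc K a k * (δ k : ℂ) * star (K a k) * (m a : ℂ)
      = (K a k * star (K a k)) * (δ k : ℂ) * (m a : ℂ) := by ring
    _ = (Complex.normSq (K a k) : ℂ) * (δ k : ℂ) * (m a : ℂ) := by rw [← h]; rfl
    _ = (m a : ℂ) * (δ k : ℂ) * (Complex.normSq (K a k) : ℂ) := by ring

lemma sum_trace_formula {κ : ℕ} (K : Fin κ → Matrix (Fin 3) (Fin 3) ℂ) (δ m : Fin 3 → ℝ) :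
    ((∑ j, K j * Matrix.diagonal (fun k => (δ k : ℂ)) * (K j)ᴴ)
      * Matrix.diagonal (fun a => (m a : ℂ))).trace
    = ↑(∑ j, ∑ a, ∑ k, m a * δ k * Complex.normSq (K j a k)) := by
  rw [Finset.sum_mul, Matrix.trace_sum, Complex.ofReal_sum]
  exact Finset.sum_congr rfl fun j _ => trace_formula (K j) δ m

lemma kraus_col {κ : ℕ} (K : Fin κ → Matrix (Fin 3) (Fin 3) ℂ)
    (hK1 : ∑ j, (K j)ᴴ * K j = 1) (k : Fin 3) :
    ∑ j, (Complex.normSq (K j 0 k) + Complex.normSq (K j 1 k) + Complex.normSq (K j 2 k)) = 1 := by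
  have h2 : (∑ j, (K j)ᴴ * K j) k k = (1 : Matrix (Fin 3) (Fin 3) ℂ) k k := by rw [hK1]
  rw [Matrix.one_apply_eq] at h2
  have h3 : (∑ j, (K j)ᴴ * K j) k k
      = ((∑ j, ∑ a, Complex.normSq (K j a k) : ℝ) : ℂ) := by
    rw [Matrix.sum_apply, Complex.ofReal_sum]
    refine Finset.sum_congr rfl fun j _ => ?_
    rw [Matrix.mul_apply, Complex.ofReal_sum]
    refine Finset.sum_congr rfl fun a _ => ?_
    rw [Matrix.conjTranspose_apply, Complex.normSq_eq_conj_mul_self]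
    rfl
  rw [h3] at h2
  have h4 : (∑ j, ∑ a, Complex.normSq (K j a k) : ℝ) = 1 := by exact_mod_cast h2
  rw [← h4]
  exact Finset.sum_congr rfl fun j _ => by rw [Fin.sum_univ_three]

lemma coreChan {κ : ℕ} (y : Fin κ → Fin 3 → Fin 3 → ℝ) (hy : ∀ j a k, 0 ≤ y j a k)
    (hcol : ∀ k, ∑ j, (y j 0 k + y j 1 k + y j 2 k) = 1)
    (P0 Q0 P1 Q1 : ℝ)
    (hP0 : P0 = ∑ j, (y j 0 0 * (1/2) + y j 0 1 * (1/4) + y j 0 2 * (1/4)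
                    + y j 1 0 * (1/4) + y j 1 1 * (1/8) + y j 1 2 * (1/8)))
    (hQ0 : Q0 = ∑ j, (y j 0 0 * (-1) + y j 0 1 * (1/2) + y j 0 2 * (1/2)
                    + y j 1 0 * (-1/2) + y j 1 1 * (1/4) + y j 1 2 * (1/4)))
    (hP1 : P1 = ∑ j, (y j 1 0 * (1/4) + y j 1 1 * (1/8) + y j 1 2 * (1/8)
                    + y j 2 0 * (1/2) + y j 2 1 * (1/4) + y j 2 2 * (1/4)))
    (hQ1 : Q1 = ∑ j, (y j 1 0 * (-1/2) + y j 1 1 * (1/4) + y j 1 2 * (1/4)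
                    + y j 2 0 * (-1) + y j 2 1 * (1/2) + y j 2 2 * (1/2))) :
    (if P0 = 0 then 0 else Q0^2 / P0) + (if P1 = 0 then 0 else Q1^2 / P1) ≤ 4 := by
  have hP0nn : 0 ≤ P0 := by
    rw [hP0]; apply Finset.sum_nonneg; intro j _
    have := hy j 0 0; have := hy j 0 1; have := hy j 0 2
    have := hy j 1 0; have := hy j 1 1; have := hy j 1 2
    linarith
  have hP1nn : 0 ≤ P1 := by
    rw [hP1]; apply Finset.sum_nonneg; intro j _
    have := hy j 1 0; have := hy j 1 1; have := hy j 1 2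
    have := hy j 2 0; have := hy j 2 1; have := hy j 2 2
    linarith
  have habs0 : |Q0| ≤ 2 * P0 := by
    rw [hQ0, hP0]
    calc |∑ j, (y j 0 0 * (-1) + y j 0 1 * (1/2) + y j 0 2 * (1/2)
        + y j 1 0 * (-1/2) + y j 1 1 * (1/4) + y j 1 2 * (1/4))|
        ≤ ∑ j, |y j 0 0 * (-1) + y j 0 1 * (1/2) + y j 0 2 * (1/2)
        + y j 1 0 * (-1/2) + y j 1 1 * (1/4) + y j 1 2 * (1/4)| :=
          Finset.abs_sum_le_sum_abs _ _
      _ ≤ ∑ j, 2 * (y j 0 0 * (1/2) + y j 0 1 * (1/4) + y j 0 2 * (1/4)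
        + y j 1 0 * (1/4) + y j 1 1 * (1/8) + y j 1 2 * (1/8)) := by
          apply Finset.sum_le_sum; intro j _
          have h1 := hy j 0 0; have h2 := hy j 0 1; have h3 := hy j 0 2
          have h4 := hy j 1 0; have h5 := hy j 1 1; have h6 := hy j 1 2
          rw [abs_le]; constructor <;> linarith
      _ = 2 * ∑ j, (y j 0 0 * (1/2) + y j 0 1 * (1/4) + y j 0 2 * (1/4)
        + y j 1 0 * (1/4) + y j 1 1 * (1/8) + y j 1 2 * (1/8)) := by
          rw [Finset.mul_sum]
  have habs1 : |Q1| ≤ 2 * P1 := by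
    rw [hQ1, hP1]
    calc |∑ j, (y j 1 0 * (-1/2) + y j 1 1 * (1/4) + y j 1 2 * (1/4)
        + y j 2 0 * (-1) + y j 2 1 * (1/2) + y j 2 2 * (1/2))|
        ≤ ∑ j, |y j 1 0 * (-1/2) + y j 1 1 * (1/4) + y j 1 2 * (1/4)
        + y j 2 0 * (-1) + y j 2 1 * (1/2) + y j 2 2 * (1/2)| :=
          Finset.abs_sum_le_sum_abs _ _
      _ ≤ ∑ j, 2 * (y j 1 0 * (1/4) + y j 1 1 * (1/8) + y j 1 2 * (1/8)
        + y j 2 0 * (1/2) + y j 2 1 * (1/4) + y j 2 2 * (1/4)) := by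
          apply Finset.sum_le_sum; intro j _
          have h1 := hy j 1 0; have h2 := hy j 1 1; have h3 := hy j 1 2
          have h4 := hy j 2 0; have h5 := hy j 2 1; have h6 := hy j 2 2
          rw [abs_le]; constructor <;> linarith
      _ = 2 * ∑ j, (y j 1 0 * (1/4) + y j 1 1 * (1/8) + y j 1 2 * (1/8)
        + y j 2 0 * (1/2) + y j 2 1 * (1/4) + y j 2 2 * (1/4)) := by
          rw [Finset.mul_sum]
  have hsum : P0 + P1 = 1 := by
    have h0 := hcol 0
    have h1 := hcol 1
    have h2 := hcol 2
    have e : P0 + P1 = (1/2) * ∑ j, (y j 0 0 + y j 1 0 + y j 2 0)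
        + (1/4) * ∑ j, (y j 0 1 + y j 1 1 + y j 2 1)
        + (1/4) * ∑ j, (y j 0 2 + y j 1 2 + y j 2 2) := by
      rw [hP0, hP1, Finset.mul_sum, Finset.mul_sum, Finset.mul_sum,
        ← Finset.sum_add_distrib, ← Finset.sum_add_distrib, ← Finset.sum_add_distrib]
      apply Finset.sum_congr rfl; intro j _; ring
    rw [e, h0, h1, h2]; norm_num
  have t0 : (if P0 = 0 then (0:ℝ) else Q0^2 / P0) ≤ 4 * P0 := by
    by_cases h : P0 = 0
    · simp [h]
    · rw [if_neg h]
      have hpos : 0 < P0 := lt_of_le_of_ne hP0nn (Ne.symm h)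
      rw [div_le_iff₀ hpos]
      nlinarith [sq_abs Q0, abs_nonneg Q0]
  have t1 : (if P1 = 0 then (0:ℝ) else Q1^2 / P1) ≤ 4 * P1 := by
    by_cases h : P1 = 0
    · simp [h]
    · rw [if_neg h]
      have hpos : 0 < P1 := lt_of_le_of_ne hP1nn (Ne.symm h)
      rw [div_le_iff₀ hpos]
      nlinarith [sq_abs Q1, abs_nonneg Q1]
  linarith

lemma coreUnit (y : Fin 3 → Fin 3 → ℝ) (hy : ∀ a k, 0 ≤ y a k)
    (hrow : ∀ a, y a 0 + y a 1 + y a 2 = 1)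
    (hcol0 : y 0 0 + y 1 0 + y 2 0 = 1)
    (P0 Q0 P1 Q1 : ℝ)
    (hP0 : P0 = y 0 0 * (1/2) + y 0 1 * (1/4) + y 0 2 * (1/4)
              + y 1 0 * (1/4) + y 1 1 * (1/8) + y 1 2 * (1/8))
    (hQ0 : Q0 = y 0 0 * (-1) + y 0 1 * (1/2) + y 0 2 * (1/2)
              + y 1 0 * (-1/2) + y 1 1 * (1/4) + y 1 2 * (1/4))
    (hP1 : P1 = y 1 0 * (1/4) + y 1 1 * (1/8) + y 1 2 * (1/8)
              + y 2 0 * (1/2) + y 2 1 * (1/4) + y 2 2 * (1/4))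
    (hQ1 : Q1 = y 1 0 * (-1/2) + y 1 1 * (1/4) + y 1 2 * (1/4)
              + y 2 0 * (-1) + y 2 1 * (1/2) + y 2 2 * (1/2)) :
    (if P0 = 0 then 0 else Q0^2 / P0) + (if P1 = 0 then 0 else Q1^2 / P1) ≤ 3 := by
  have hc0 := hcol0
  have hr0 := hrow 0; have hr1 := hrow 1; have hr2 := hrow 2
  have h00 := hy 0 0; have h01 := hy 0 1; have h02 := hy 0 2
  have h10 := hy 1 0; have h11 := hy 1 1; have h12 := hy 1 2
  have h20 := hy 2 0; have h21 := hy 2 1; have h22 := hy 2 2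
  have hP0b : 3/8 ≤ P0 := by rw [hP0]; linarith
  have hP1b : 3/8 ≤ P1 := by rw [hP1]; linarith
  have hQ0b : Q0^2 ≤ 9/16 := by
    have l : -(3/4) ≤ Q0 := by rw [hQ0]; linarith [hc0]
    have u : Q0 ≤ 3/4 := by rw [hQ0]; linarith
    nlinarith
  have hQ1b : Q1^2 ≤ 9/16 := by
    have l : -(3/4) ≤ Q1 := by rw [hQ1]; linarith [hc0]
    have u : Q1 ≤ 3/4 := by rw [hQ1]; linarith
    nlinarith
  have hP0pos : (0:ℝ) < P0 := by linarith
  have hP1pos : (0:ℝ) < P1 := by linarith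
  rw [if_neg (ne_of_gt hP0pos), if_neg (ne_of_gt hP1pos)]
  have t0 : Q0^2 / P0 ≤ (9/16)/(3/8) := div_le_div₀ (by norm_num) hQ0b (by norm_num) hP0b
  have t1 : Q1^2 / P1 ≤ (9/16)/(3/8) := div_le_div₀ (by norm_num) hQ1b (by norm_num) hP1b
  have : ((9:ℝ)/16)/(3/8) = 3/2 := by norm_num
  linarith

lemma chanBound {κ : ℕ} (K : Fin κ → Matrix (Fin 3) (Fin 3) ℂ)
    (hK1 : ∑ j, (K j)ᴴ * K j = 1)
    (M : Fin 2 → Matrix (Fin 3) (Fin 3) ℂ)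
    (hM0 : M 0 = Matrix.diagonal (fun a => ((![1,1/2,0] : Fin 3 → ℝ) a : ℂ)))
    (hM1 : M 1 = Matrix.diagonal (fun a => ((![0,1/2,1] : Fin 3 → ℝ) a : ℂ))) :
    FisherInfo (∑ j, K j * Matrix.diagonal (fun k => ((![1/2,1/4,1/4] : Fin 3 → ℝ) k : ℂ)) * (K j)ᴴ)
      (∑ j, K j * Matrix.diagonal (fun k => ((![-1,1/2,1/2] : Fin 3 → ℝ) k : ℂ)) * (K j)ᴴ) M ≤ 4 := by
  unfold FisherInfo
  rw [Fin.sum_univ_two, hM0, hM1, sum_trace_formula, sum_trace_formula,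
    sum_trace_formula, sum_trace_formula]
  simp only [Complex.ofReal_eq_zero, Complex.ofReal_re]
  apply coreChan (fun j a k => Complex.normSq (K j a k))
    (fun j a k => Complex.normSq_nonneg _) (kraus_col K hK1)
  · refine Finset.sum_congr rfl fun j _ => ?_
    rw [Fin.sum_univ_three]
    simp only [Fin.sum_univ_three, Matrix.cons_val_zero, Matrix.cons_val_one, Matrix.head_cons,
      Matrix.cons_val_two, Matrix.tail_cons]
    norm_num
    try ring
  · refine Finset.sum_congr rfl fun j _ => ?_
    rw [Fin.sum_univ_three]
    simp only [Fin.sum_univ_three, Matrix.cons_val_zero, Matrix.cons_val_one, Matrix.head_cons,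
      Matrix.cons_val_two, Matrix.tail_cons]
    norm_num
    try ring
  · refine Finset.sum_congr rfl fun j _ => ?_
    rw [Fin.sum_univ_three]
    simp only [Fin.sum_univ_three, Matrix.cons_val_zero, Matrix.cons_val_one, Matrix.head_cons,
      Matrix.cons_val_two, Matrix.tail_cons]
    norm_num
    try ring
  · refine Finset.sum_congr rfl fun j _ => ?_
    rw [Fin.sum_univ_three]
    simp only [Fin.sum_univ_three, Matrix.cons_val_zero, Matrix.cons_val_one, Matrix.head_cons,
      Matrix.cons_val_two, Matrix.tail_cons]
    norm_num
    try ring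

lemma unitBound (U : Matrix (Fin 3) (Fin 3) ℂ) (hU : U ∈ Matrix.unitaryGroup (Fin 3) ℂ)
    (M : Fin 2 → Matrix (Fin 3) (Fin 3) ℂ)
    (hM0 : M 0 = Matrix.diagonal (fun a => ((![1,1/2,0] : Fin 3 → ℝ) a : ℂ)))
    (hM1 : M 1 = Matrix.diagonal (fun a => ((![0,1/2,1] : Fin 3 → ℝ) a : ℂ))) :
    FisherInfo (U * Matrix.diagonal (fun k => ((![1/2,1/4,1/4] : Fin 3 → ℝ) k : ℂ)) * Uᴴ)
      (U * Matrix.diagonal (fun k => ((![-1,1/2,1/2] : Fin 3 → ℝ) k : ℂ)) * Uᴴ) M ≤ 3 := by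
  have hU1 : Uᴴ * U = 1 := by
    have := hU.1
    rwa [Matrix.star_eq_conjTranspose] at this
  have hU2 : U * Uᴴ = 1 := by
    have := hU.2
    rwa [Matrix.star_eq_conjTranspose] at this
  have hrow : ∀ a, Complex.normSq (U a 0) + Complex.normSq (U a 1) + Complex.normSq (U a 2) = 1 := by
    intro a
    have h2 : (U * Uᴴ) a a = (1 : Matrix (Fin 3) (Fin 3) ℂ) a a := by rw [hU2]
    rw [Matrix.one_apply_eq, Matrix.mul_apply] at h2
    have h3 : ∑ k, U a k * Uᴴ k a = ((∑ k, Complex.normSq (U a k) : ℝ) : ℂ) := by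
      rw [Complex.ofReal_sum]
      refine Finset.sum_congr rfl fun k _ => ?_
      rw [Matrix.conjTranspose_apply, ← Complex.mul_conj]
      rfl
    rw [h3] at h2
    have h4 : (∑ k, Complex.normSq (U a k) : ℝ) = 1 := by exact_mod_cast h2
    rw [← h4, Fin.sum_univ_three]
  have hcol : Complex.normSq (U 0 0) + Complex.normSq (U 1 0) + Complex.normSq (U 2 0) = 1 := by
    have h2 : (Uᴴ * U) 0 0 = (1 : Matrix (Fin 3) (Fin 3) ℂ) 0 0 := by rw [hU1]
    rw [Matrix.one_apply_eq, Matrix.mul_apply] at h2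
    have h3 : ∑ a, Uᴴ 0 a * U a 0 = ((∑ a, Complex.normSq (U a 0) : ℝ) : ℂ) := by
      rw [Complex.ofReal_sum]
      refine Finset.sum_congr rfl fun a _ => ?_
      rw [Matrix.conjTranspose_apply, Complex.normSq_eq_conj_mul_self]
      rfl
    rw [h3] at h2
    have h4 : (∑ a, Complex.normSq (U a 0) : ℝ) = 1 := by exact_mod_cast h2
    rw [← h4, Fin.sum_univ_three]
  unfold FisherInfo
  rw [Fin.sum_univ_two, hM0, hM1, trace_formula, trace_formula, trace_formula, trace_formula]
  simp only [Complex.ofReal_eq_zero, Complex.ofReal_re]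
  apply coreUnit (fun a k => Complex.normSq (U a k)) (fun a k => Complex.normSq_nonneg _)
    hrow hcol <;>
  · simp only [Fin.sum_univ_three, Matrix.cons_val_zero, Matrix.cons_val_one, Matrix.head_cons,
      Matrix.cons_val_two, Matrix.tail_cons]
    norm_num
    try ring

def Kopt : Fin 3 → Matrix (Fin 3) (Fin 3) ℂ :=
  ![!![1,0,0;0,0,0;0,0,0], !![0,0,0;0,0,0;0,1,0], !![0,0,0;0,0,0;0,0,1]]

lemma Kopt_sum : ∑ j, (Kopt j)ᴴ * Kopt j = 1 := by
  ext i j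
  fin_cases i <;> fin_cases j <;>
    simp [Kopt, Matrix.mul_apply, Fin.sum_univ_three, Matrix.one_apply, Matrix.vecHead,
      Matrix.vecTail]

lemma opt_val (M : Fin 2 → Matrix (Fin 3) (Fin 3) ℂ)
    (hM0 : M 0 = Matrix.diagonal (fun a => ((![1,1/2,0] : Fin 3 → ℝ) a : ℂ)))
    (hM1 : M 1 = Matrix.diagonal (fun a => ((![0,1/2,1] : Fin 3 → ℝ) a : ℂ))) :
    FisherInfo (∑ j, Kopt j * Matrix.diagonal (fun k => ((![1/2,1/4,1/4] : Fin 3 → ℝ) k : ℂ)) * (Kopt j)ᴴ)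
      (∑ j, Kopt j * Matrix.diagonal (fun k => ((![-1,1/2,1/2] : Fin 3 → ℝ) k : ℂ)) * (Kopt j)ᴴ) M = 4 := by
  unfold FisherInfo
  rw [Fin.sum_univ_two, hM0, hM1, sum_trace_formula, sum_trace_formula,
    sum_trace_formula, sum_trace_formula]
  norm_num [Kopt, Fin.sum_univ_three, Complex.normSq, Matrix.vecHead, Matrix.vecTail,
    Matrix.cons_val_zero, Matrix.cons_val_one, Matrix.cons_val_two, Matrix.of_apply,
    Matrix.cons_val']

end Stmt16Aux

/-- the explicit three-level example with
`ζ(θ) = diag(cos²θ, ½sin²θ, ½sin²θ)` and the two-outcome commuting measurement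
`M₁ = diag(1, ½, 0)`, `M₂ = diag(0, ½, 1)`: at `θ₀ = π/4` the QPFI equals 4 while the
unitary-preprocessing-optimized Fisher information is strictly smaller than 4. -/
theorem stmt16
    (ζ : ℝ → Matrix (Fin 3) (Fin 3) ℂ)
    (hζ : ∀ θ, ζ θ = Matrix.diagonal
      ![(((Real.cos θ) ^ 2 : ℝ) : ℂ), ((((Real.sin θ) ^ 2) / 2 : ℝ) : ℂ),
        ((((Real.sin θ) ^ 2) / 2 : ℝ) : ℂ)])
    (ζ' : Matrix (Fin 3) (Fin 3) ℂ)
    (hζ' : ∀ i j, HasDerivAt (fun θ => ζ θ i j) (ζ' i j) (Real.pi / 4))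
    (M : Fin 2 → Matrix (Fin 3) (Fin 3) ℂ)
    (hM0 : M 0 = Matrix.diagonal ![(1 : ℂ), (1 / 2 : ℂ), (0 : ℂ)])
    (hM1 : M 1 = Matrix.diagonal ![(0 : ℂ), (1 / 2 : ℂ), (1 : ℂ)]) :
    QPFI (ζ (Real.pi / 4)) ζ' M = 4 ∧ QUPFI (ζ (Real.pi / 4)) ζ' M < 4 := by 
  have hc : Real.cos (Real.pi/4) = Real.sqrt 2 / 2 := Real.cos_pi_div_four
  have hs : Real.sin (Real.pi/4) = Real.sqrt 2 / 2 := Real.sin_pi_div_four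
  have h2 : (Real.sqrt 2) ^ 2 = 2 := Real.sq_sqrt (by norm_num)
  have hcossq : Real.cos (Real.pi/4) ^ 2 = 1/2 := by rw [hc]; nlinarith [h2]
  have hsinsq : Real.sin (Real.pi/4) ^ 2 = 1/2 := by rw [hs]; nlinarith [h2]
  have hz0 : ζ (Real.pi/4) = Matrix.diagonal
      (fun k => (((![1/2,1/4,1/4] : Fin 3 → ℝ)) k : ℂ)) := by
    rw [hζ]
    refine congrArg Matrix.diagonal ?_
    have c1 : (((Real.cos (Real.pi/4))^2 : ℝ) : ℂ) = ((1/2 : ℝ) : ℂ) := by rw [hcossq]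
    have c2 : (((Real.sin (Real.pi/4))^2/2 : ℝ) : ℂ) = ((1/4 : ℝ) : ℂ) := by
      rw [show Real.sin (Real.pi/4)^2/2 = 1/4 by linarith]
    funext k
    fin_cases k
    · exact c1
    · exact c2
    · exact c2
  have hz' : ζ' = Matrix.diagonal (fun k => (((![-1,1/2,1/2] : Fin 3 → ℝ)) k : ℂ)) := by
    have hcos2 : HasDerivAt (fun θ : ℝ => ((Real.cos θ ^ 2 : ℝ) : ℂ)) ((-1 : ℝ) : ℂ) (Real.pi/4) := by
      have h : HasDerivAt (fun θ : ℝ => Real.cos θ ^ 2)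
          (2 * Real.cos (Real.pi/4) ^ 1 * (-Real.sin (Real.pi/4))) (Real.pi/4) :=
        (Real.hasDerivAt_cos _).pow 2
      have h' : (2 : ℝ) * Real.cos (Real.pi/4) ^ 1 * (-Real.sin (Real.pi/4)) = -1 := by
        rw [hc, hs]; nlinarith [h2]
      rw [h'] at h
      exact h.ofReal_comp
    have hsin2 : HasDerivAt (fun θ : ℝ => ((Real.sin θ ^ 2 / 2 : ℝ) : ℂ)) ((1/2 : ℝ) : ℂ) (Real.pi/4) := by
      have h : HasDerivAt (fun θ : ℝ => Real.sin θ ^ 2 / 2)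
          ((2 * Real.sin (Real.pi/4) ^ 1 * (Real.cos (Real.pi/4))) / 2) (Real.pi/4) :=
        ((Real.hasDerivAt_sin _).pow 2).div_const 2
      have h' : (2 * Real.sin (Real.pi/4) ^ 1 * (Real.cos (Real.pi/4))) / 2 = 1/2 := by
        rw [hc, hs]; nlinarith [h2]
      rw [h'] at h
      exact h.ofReal_comp
    have hcos2' : HasDerivAt (fun θ : ℝ => Complex.cos θ ^ 2) (-1 : ℂ) (Real.pi/4) := by
      have h := hcos2
      simp only [Complex.ofReal_pow, Complex.ofReal_cos] at h
      simpa using h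
    have hsin2' : HasDerivAt (fun θ : ℝ => Complex.sin θ ^ 2 / 2) ((1/2 : ℝ) : ℂ) (Real.pi/4) := by
      have h := hsin2
      simp only [Complex.ofReal_div, Complex.ofReal_pow, Complex.ofReal_sin,
        Complex.ofReal_ofNat] at h
      simpa using h
    ext i j
    have hd := hζ' i j
    simp only [hζ] at hd
    fin_cases i <;> fin_cases j <;>
      simp only [Matrix.diagonal_apply, Matrix.cons_val_zero, Matrix.cons_val_one,
        Matrix.head_cons, Matrix.cons_val_two, Matrix.tail_cons] at hd ⊢ <;>
      norm_num at hd ⊢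
    · exact hd.unique hcos2'
    · exact hd.unique (hasDerivAt_const _ _)
    · exact hd.unique (hasDerivAt_const _ _)
    · exact hd.unique (hasDerivAt_const _ _)
    · exact hd.unique (by simpa using hsin2')
    · exact hd.unique (hasDerivAt_const _ _)
    · exact hd.unique (hasDerivAt_const _ _)
    · exact hd.unique (hasDerivAt_const _ _)
    · exact hd.unique (by simpa using hsin2')
  have hM0' : M 0 = Matrix.diagonal (fun a => (((![1,1/2,0] : Fin 3 → ℝ)) a : ℂ)) := by
    rw [hM0]
    refine congrArg Matrix.diagonal ?_
    funext a
    fin_cases a <;> norm_num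
  have hM1' : M 1 = Matrix.diagonal (fun a => (((![0,1/2,1] : Fin 3 → ℝ)) a : ℂ)) := by
    rw [hM1]
    refine congrArg Matrix.diagonal ?_
    funext a
    fin_cases a <;> norm_num
  constructor
  · unfold QPFI
    have hub : ∀ x ∈ {x : ℝ | ∃ E : Matrix (Fin 3) (Fin 3) ℂ → Matrix (Fin 3) (Fin 3) ℂ,
        IsQuantumChannel E ∧ x = FisherInfo (E (ζ (Real.pi/4))) (E ζ') M}, x ≤ 4 := by
      rintro x ⟨E, ⟨κ, K, hK1, hKE⟩, rfl⟩
      rw [hKE, hKE, hz0, hz']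
      exact Stmt16Aux.chanBound K hK1 M hM0' hM1'
    apply le_antisymm
    · exact Real.sSup_le hub (by norm_num)
    · apply le_csSup ⟨4, hub⟩
      refine ⟨fun σ => ∑ j, Stmt16Aux.Kopt j * σ * (Stmt16Aux.Kopt j)ᴴ,
        ⟨3, Stmt16Aux.Kopt, Stmt16Aux.Kopt_sum, fun σ => rfl⟩, ?_⟩
      rw [hz0, hz']
      exact (Stmt16Aux.opt_val M hM0' hM1').symm
  · unfold QUPFI
    have hub : ∀ x ∈ {x : ℝ | ∃ U : Matrix (Fin 3) (Fin 3) ℂ, U ∈ Matrix.unitaryGroup (Fin 3) ℂ ∧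
        x = FisherInfo (U * ζ (Real.pi/4) * Uᴴ) (U * ζ' * Uᴴ) M}, x ≤ 3 := by
      rintro x ⟨U, hU, rfl⟩
      rw [hz0, hz']
      exact Stmt16Aux.unitBound U hU M hM0' hM1'
    have h3 := Real.sSup_le hub (by norm_num)
    linarith
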